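/- (Harmonicity of the first variation of the metric factor, from Section 5.) Let μ : ℍ → ℂ and ν : ℍ → Mₙ(ℂ) be smooth, and let (t, z) ↦ Φ₊^t(z) and (t, z) ↦ Φ₋^t(z) be smooth families of maps ℍ → GL(n,ℂ), defined for t in a neighborhood of 0 in ℝ, such that Φ₊⁰ ≡ I, Φ₋⁰ ≡ I, ∂̄Φ₊^t = t·μ·∂Φ₊^t for all t, and ∂Φ₋^t = 0 for all t (Wirtinger derivatives in z, entrywise). Set Φ₂^t := Φ₊^t · Φ₋^t and F := ∂_t|_{t=0} [ (conj(Φ₂^t))^T · Φ₂^t ], where (conj(·))^T denotes the conjugate transpose. Then ∂∂̄F = 0 on ℍ, i.e. every entry of F is a harmonic function. -/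

import Mathlib

open Complex

/-- The open upper half-plane in ℂ. -/
def UHP : Set ℂ := {z : ℂ | 0 < z.im}

/-- The Wirtinger derivative ∂f = (1/2)(∂f/∂x - i·∂f/∂y). -/
noncomputable def wD (f : ℂ → ℂ) (z : ℂ) : ℂ :=
  (1 / 2) * (fderiv ℝ f z 1 - Complex.I * fderiv ℝ f z Complex.I)

/-- The Wirtinger derivative ∂̄f = (1/2)(∂f/∂x + i·∂f/∂y). -/
noncomputable def wDbar (f : ℂ → ℂ) (z : ℂ) : ℂ :=
  (1 / 2) * (fderiv ℝ f z 1 + Complex.I * fderiv ℝ f z Complex.I)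


/-- Entrywise Wirtinger derivative ∂ of a matrix-valued function. -/
noncomputable def mwD (n : ℕ) (f : ℂ → Matrix (Fin n) (Fin n) ℂ) (z : ℂ) :
    Matrix (Fin n) (Fin n) ℂ :=
  Matrix.of fun i j => wD (fun w => f w i j) z

/-- Entrywise Wirtinger derivative ∂̄ of a matrix-valued function. -/
noncomputable def mwDbar (n : ℕ) (f : ℂ → Matrix (Fin n) (Fin n) ℂ) (z : ℂ) :
    Matrix (Fin n) (Fin n) ℂ :=
  Matrix.of fun i j => wDbar (fun w => f w i j) z

/-- Entrywise smoothness (C^∞ over ℝ) of a matrix-valued function on a set. -/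
def MSmoothOn (n : ℕ) (f : ℂ → Matrix (Fin n) (Fin n) ℂ) (s : Set ℂ) : Prop :=
  ∀ i j, ContDiffOn ℝ (⊤ : ℕ∞) (fun z => f z i j) s

/-- Entrywise derivative at `t = 0` of a one-parameter family of matrices. -/
noncomputable def mderiv0 (n : ℕ) (f : ℝ → Matrix (Fin n) (Fin n) ℂ) :
    Matrix (Fin n) (Fin n) ℂ :=
  Matrix.of fun i j => deriv (fun t => f t i j) 0

/-- Joint entrywise smoothness (C^∞ over ℝ) of a one-parameter family of
matrix-valued functions on `D × s`. -/
def MSmoothOn2 (n : ℕ) (f : ℝ → ℂ → Matrix (Fin n) (Fin n) ℂ)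
    (D : Set ℝ) (s : Set ℂ) : Prop :=
  ∀ i j, ContDiffOn ℝ (⊤ : ℕ∞) (fun p : ℝ × ℂ => f p.1 p.2 i j) (D ×ˢ s)




lemma wD_congr {f g : ℂ → ℂ} {z : ℂ} (h : f =ᶠ[nhds z] g) : wD f z = wD g z := by
  rw [wD, wD, h.fderiv_eq]

lemma wDbar_congr {f g : ℂ → ℂ} {z : ℂ} (h : f =ᶠ[nhds z] g) : wDbar f z = wDbar g z := by
  rw [wDbar, wDbar, h.fderiv_eq]

lemma wD_zero {z : ℂ} : wD (fun _ => (0:ℂ)) z = 0 := by simp [wD]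

lemma wDbar_zero {z : ℂ} : wDbar (fun _ => (0:ℂ)) z = 0 := by simp [wDbar]

lemma wD_add {f g : ℂ → ℂ} {z : ℂ} (hf : DifferentiableAt ℝ f z)
    (hg : DifferentiableAt ℝ g z) :
    wD (fun w => f w + g w) z = wD f z + wD g z := by
  simp only [wD, fderiv_fun_add hf hg, ContinuousLinearMap.add_apply]; ring

lemma wDbar_add {f g : ℂ → ℂ} {z : ℂ} (hf : DifferentiableAt ℝ f z)
    (hg : DifferentiableAt ℝ g z) :
    wDbar (fun w => f w + g w) z = wDbar f z + wDbar g z := by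
  simp only [wDbar, fderiv_fun_add hf hg, ContinuousLinearMap.add_apply]; ring

lemma fderiv_star_apply (f : ℂ → ℂ) (z v : ℂ) :
    fderiv ℝ (fun w => star (f w)) z v = star (fderiv ℝ f z v) := by
  have h : (fun w => star (f w)) = ⇑Complex.conjCLE ∘ f := by
    funext w; simp [Complex.conjCLE_apply]
  rw [h, Complex.conjCLE.comp_fderiv]
  simp

lemma wD_star {f : ℂ → ℂ} {z : ℂ} :
    wD (fun w => star (f w)) z = star (wDbar f z) := by
  simp only [wD, wDbar, fderiv_star_apply]
  simp only [Complex.star_def, map_mul, map_add, map_sub, map_div₀, map_one, map_ofNat,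
    Complex.conj_I, Complex.conj_conj]
  ring

lemma wDbar_star {f : ℂ → ℂ} {z : ℂ} :
    wDbar (fun w => star (f w)) z = star (wD f z) := by
  simp only [wD, wDbar, fderiv_star_apply]
  simp only [Complex.star_def, map_mul, map_add, map_sub, map_div₀, map_one, map_ofNat,
    Complex.conj_I, Complex.conj_conj]
  ring

variable {E : Type*} [NormedAddCommGroup E] [NormedSpace ℝ E]

lemma fderiv_right_top {f : E → ℂ} {p : E} (hf : ContDiffAt ℝ (⊤:ℕ∞) f p) :
    ContDiffAt ℝ (⊤:ℕ∞) (fderiv ℝ f) p :=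
  hf.fderiv_right (by exact_mod_cast le_top)

lemma dd_contDiffAt {f : E → ℂ} {p : E} (hf : ContDiffAt ℝ (⊤:ℕ∞) f p) (u : E) :
    ContDiffAt ℝ (⊤:ℕ∞) (fun q => fderiv ℝ f q u) p :=
  (fderiv_right_top hf).clm_apply contDiffAt_const

lemma dd_diff {f : E → ℂ} {p : E} (hf : ContDiffAt ℝ (⊤:ℕ∞) f p) (u : E) :
    DifferentiableAt ℝ (fun q => fderiv ℝ f q u) p :=
  (dd_contDiffAt hf u).differentiableAt (by simp)

lemma fderiv_dd_symm {f : E → ℂ} {p : E} (hf : ContDiffAt ℝ (⊤:ℕ∞) f p) (u v : E) :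
    fderiv ℝ (fun q => fderiv ℝ f q u) p v = fderiv ℝ (fun q => fderiv ℝ f q v) p u := by
  have hd : DifferentiableAt ℝ (fderiv ℝ f) p :=
    (fderiv_right_top hf).differentiableAt (by simp)
  have key : ∀ w x : E, fderiv ℝ (fun q => fderiv ℝ f q w) p x
      = fderiv ℝ (fderiv ℝ f) p x w := by
    intro w x
    rw [fderiv_clm_apply hd (differentiableAt_const w)]
    simp
  rw [key, key]
  exact hf.isSymmSndFDerivAt (by rw [minSmoothness_of_isRCLikeNormedField]; exact WithTop.coe_le_coe.mpr (le_top : (2:ℕ∞) ≤ ⊤)) v u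

lemma wD_contDiffAt {f : ℂ → ℂ} {z : ℂ} (hf : ContDiffAt ℝ (⊤:ℕ∞) f z) :
    ContDiffAt ℝ (⊤:ℕ∞) (wD f) z := by
  have h1 := dd_contDiffAt hf 1
  have hI := dd_contDiffAt hf Complex.I
  exact contDiffAt_const.mul (h1.sub (contDiffAt_const.mul hI))

lemma wDbar_contDiffAt {f : ℂ → ℂ} {z : ℂ} (hf : ContDiffAt ℝ (⊤:ℕ∞) f z) :
    ContDiffAt ℝ (⊤:ℕ∞) (wDbar f) z := by
  have h1 := dd_contDiffAt hf 1
  have hI := dd_contDiffAt hf Complex.I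
  exact contDiffAt_const.mul (h1.add (contDiffAt_const.mul hI))

lemma star_contDiffAt {f : ℂ → ℂ} {z : ℂ} (hf : ContDiffAt ℝ (⊤:ℕ∞) f z) :
    ContDiffAt ℝ (⊤:ℕ∞) (fun w => star (f w)) z := by
  have : (fun w => star (f w)) = ⇑Complex.conjCLE ∘ f := by
    funext w; simp [Complex.conjCLE_apply]
  rw [this]
  exact (Complex.conjCLE.contDiff.contDiffAt).comp z hf

lemma wD_wDbar_comm {f : ℂ → ℂ} {z : ℂ} (hf : ContDiffAt ℝ (⊤:ℕ∞) f z) :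
    wD (wDbar f) z = wDbar (wD f) z := by
  have h1 := dd_diff hf (1 : ℂ)
  have hI := dd_diff hf Complex.I
  have ebar : wDbar f = fun w => (1/2 : ℂ) * (fderiv ℝ f w 1 + Complex.I * fderiv ℝ f w Complex.I) := rfl
  have eD : wD f = fun w => (1/2 : ℂ) * (fderiv ℝ f w 1 - Complex.I * fderiv ℝ f w Complex.I) := rfl
  have hD : ∀ v : ℂ,
      fderiv ℝ (fun w => (1/2 : ℂ) * (fderiv ℝ f w 1 + Complex.I * fderiv ℝ f w Complex.I)) z v
      = (1/2 : ℂ) * (fderiv ℝ (fun w => fderiv ℝ f w 1) z v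
          + Complex.I * fderiv ℝ (fun w => fderiv ℝ f w Complex.I) z v) := by
    intro v
    rw [fderiv_const_mul (h1.fun_add (hI.const_mul Complex.I)) ((1:ℂ)/2),
      fderiv_fun_add h1 (hI.const_mul Complex.I), fderiv_const_mul hI Complex.I]
    simp only [ContinuousLinearMap.smul_apply, ContinuousLinearMap.add_apply, smul_eq_mul]
  have hD' : ∀ v : ℂ,
      fderiv ℝ (fun w => (1/2 : ℂ) * (fderiv ℝ f w 1 - Complex.I * fderiv ℝ f w Complex.I)) z v
      = (1/2 : ℂ) * (fderiv ℝ (fun w => fderiv ℝ f w 1) z v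
          - Complex.I * fderiv ℝ (fun w => fderiv ℝ f w Complex.I) z v) := by
    intro v
    rw [fderiv_const_mul (h1.fun_sub (hI.const_mul Complex.I)) ((1:ℂ)/2),
      fderiv_fun_sub h1 (hI.const_mul Complex.I), fderiv_const_mul hI Complex.I]
    simp only [ContinuousLinearMap.smul_apply, ContinuousLinearMap.sub_apply, smul_eq_mul]
  have hsym := fderiv_dd_symm hf (1 : ℂ) Complex.I
  rw [wD, wDbar, ebar, eD, hD 1, hD Complex.I, hD' 1, hD' Complex.I, hsym]
  ring

lemma deriv_slice {h : ℝ × ℂ → ℂ} {t : ℝ} {w : ℂ} (hd : DifferentiableAt ℝ h (t, w)) :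
    deriv (fun s => h (s, w)) t = fderiv ℝ h (t, w) (1, 0) := by
  have h1 : HasFDerivAt (fun s : ℝ => (s, w)) (ContinuousLinearMap.inl ℝ ℝ ℂ) t :=
    hasFDerivAt_prodMk_left t w
  have h2 := (hd.hasFDerivAt.comp t h1).hasDerivAt
  have h3 : HasDerivAt (fun s => h (s, w)) (((fderiv ℝ h (t, w)).comp (ContinuousLinearMap.inl ℝ ℝ ℂ)) 1) t := h2
  rw [h3.deriv]; simp

lemma fderiv_slice {h : ℝ × ℂ → ℂ} {t : ℝ} {z : ℂ} (hd : DifferentiableAt ℝ h (t, z)) (v : ℂ) :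
    fderiv ℝ (fun w => h (t, w)) z v = fderiv ℝ h (t, z) (0, v) := by
  have h1 : HasFDerivAt (fun w : ℂ => (t, w)) (ContinuousLinearMap.inr ℝ ℝ ℂ) z :=
    hasFDerivAt_prodMk_right t z
  have h2 := hd.hasFDerivAt.comp z h1
  have h3 : HasFDerivAt (fun w => h (t, w)) ((fderiv ℝ h (t, z)).comp (ContinuousLinearMap.inr ℝ ℝ ℂ)) z := h2
  rw [h3.fderiv]; simp

section swap
variable {h : ℝ × ℂ → ℂ} {O : Set (ℝ × ℂ)} {z : ℂ}

lemma ev_mem_w (hO : IsOpen O) (hz : (0, z) ∈ O) : ∀ᶠ w in nhds z, ((0:ℝ), w) ∈ O :=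
  (continuous_const.prodMk continuous_id).continuousAt.preimage_mem_nhds (hO.mem_nhds hz)

lemma ev_mem_t (hO : IsOpen O) (hz : (0, z) ∈ O) : ∀ᶠ t in nhds (0:ℝ), (t, z) ∈ O :=
  (continuous_id.prodMk continuous_const).continuousAt.preimage_mem_nhds (hO.mem_nhds hz)

lemma slice_ev_eq (hO : IsOpen O) (hh : ContDiffOn ℝ (⊤:ℕ∞) h O) (hz : (0, z) ∈ O) :
    (fun w => deriv (fun t => h (t, w)) 0) =ᶠ[nhds z]
      (fun w => fderiv ℝ h (0, w) (1, 0)) := by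
  filter_upwards [ev_mem_w hO hz] with w hw
  exact deriv_slice (((hh.contDiffAt (hO.mem_nhds hw)).differentiableAt (by simp)))

lemma swap_fderiv (hO : IsOpen O) (hh : ContDiffOn ℝ (⊤:ℕ∞) h O) (hz : (0, z) ∈ O) (v : ℂ) :
    fderiv ℝ (fun w => deriv (fun t => h (t, w)) 0) z v
      = deriv (fun t => fderiv ℝ (fun w => h (t, w)) z v) 0 := by
  have hca : ∀ p ∈ O, ContDiffAt ℝ (⊤:ℕ∞) h p := fun p hp => hh.contDiffAt (hO.mem_nhds hp)
  have hdiff : ∀ p ∈ O, DifferentiableAt ℝ h p := fun p hp =>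
    (hca p hp).differentiableAt (by simp)
  rw [(slice_ev_eq hO hh hz).fderiv_eq]
  have hstep : fderiv ℝ (fun w => (fun p => fderiv ℝ h p ((1:ℝ), (0:ℂ))) ((0:ℝ), w)) z v
      = fderiv ℝ (fun p => fderiv ℝ h p ((1:ℝ), (0:ℂ))) ((0:ℝ), z) ((0 : ℝ), v) :=
    fderiv_slice (dd_diff (hca _ hz) ((1:ℝ), (0:ℂ))) v
  rw [hstep, fderiv_dd_symm (hca _ hz) ((1:ℝ),(0:ℂ)) ((0:ℝ), v)]
  have e2 : (fun t => fderiv ℝ (fun w => h (t, w)) z v) =ᶠ[nhds (0:ℝ)]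
      (fun t => fderiv ℝ h (t, z) ((0:ℝ), v)) := by
    filter_upwards [ev_mem_t hO hz] with t ht
    exact fderiv_slice (hdiff _ ht) v
  rw [e2.deriv_eq]
  exact (deriv_slice (dd_diff (hca _ hz) ((0:ℝ), v))).symm

lemma slice_deriv_contDiffAt (hO : IsOpen O) (hh : ContDiffOn ℝ (⊤:ℕ∞) h O) (hz : (0, z) ∈ O) :
    ContDiffAt ℝ (⊤:ℕ∞) (fun w => deriv (fun t => h (t, w)) 0) z := by
  have hca := hh.contDiffAt (hO.mem_nhds hz)
  refine ContDiffAt.congr_of_eventuallyEq ?_ (slice_ev_eq hO hh hz)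
  exact (dd_contDiffAt hca ((1:ℝ),(0:ℂ))).comp z (contDiffAt_const.prodMk contDiffAt_id)

lemma slice_fderiv_diff_t (hO : IsOpen O) (hh : ContDiffOn ℝ (⊤:ℕ∞) h O) (hz : (0, z) ∈ O)
    (v : ℂ) :
    DifferentiableAt ℝ (fun t => fderiv ℝ (fun w => h (t, w)) z v) 0 := by
  have hca := hh.contDiffAt (hO.mem_nhds hz)
  have e2 : (fun t => fderiv ℝ (fun w => h (t, w)) z v) =ᶠ[nhds (0:ℝ)]
      (fun t => fderiv ℝ h (t, z) ((0:ℝ), v)) := by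
    filter_upwards [ev_mem_t hO hz] with t ht
    exact fderiv_slice ((hh.contDiffAt (hO.mem_nhds ht)).differentiableAt
      (by simp)) v
  refine DifferentiableAt.congr_of_eventuallyEq ?_ e2
  exact (((dd_contDiffAt hca ((0:ℝ),v)).comp 0
    (contDiffAt_id.prodMk contDiffAt_const)).differentiableAt (by simp))

lemma swap_wDbar (hO : IsOpen O) (hh : ContDiffOn ℝ (⊤:ℕ∞) h O) (hz : (0, z) ∈ O) :
    wDbar (fun w => deriv (fun t => h (t, w)) 0) z
      = deriv (fun t => wDbar (fun w => h (t, w)) z) 0 := by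
  have hu := (slice_fderiv_diff_t hO hh hz 1).hasDerivAt
  have hv := (slice_fderiv_diff_t hO hh hz Complex.I).hasDerivAt
  have hr := ((hu.add (hv.const_mul Complex.I)).const_mul ((1:ℂ)/2)).deriv
  rw [wDbar, swap_fderiv hO hh hz 1, swap_fderiv hO hh hz Complex.I]
  exact hr.symm

lemma swap_wD (hO : IsOpen O) (hh : ContDiffOn ℝ (⊤:ℕ∞) h O) (hz : (0, z) ∈ O) :
    wD (fun w => deriv (fun t => h (t, w)) 0) z
      = deriv (fun t => wD (fun w => h (t, w)) z) 0 := by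
  have hu := (slice_fderiv_diff_t hO hh hz 1).hasDerivAt
  have hv := (slice_fderiv_diff_t hO hh hz Complex.I).hasDerivAt
  have hr := ((hu.sub (hv.const_mul Complex.I)).const_mul ((1:ℂ)/2)).deriv
  rw [wD, swap_fderiv hO hh hz 1, swap_fderiv hO hh hz Complex.I]
  exact hr.symm

end swap

lemma isOpen_UHP : IsOpen UHP := isOpen_lt continuous_const Complex.continuous_im

open Matrix in
/-- harmonicity of the first variation of the metric factor: with
`Φ₂^t = Φ₊^t · Φ₋^t`, `Φ₊⁰ ≡ I ≡ Φ₋⁰`, `∂̄Φ₊^t = t·μ·∂Φ₊^t` and `∂Φ₋^t = 0`, the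
matrix-valued function `F = ∂_t|₀ [(conj Φ₂^t)ᵀ · Φ₂^t]` satisfies `∂∂̄F = 0` on ℍ. -/
theorem first_variation_metric_factor_harmonic (n : ℕ)
    (D : Set ℝ) (hD : D ∈ nhds (0 : ℝ))
    (μ : ℂ → ℂ) (hμ_smooth : ContDiffOn ℝ (⊤ : ℕ∞) μ UHP)
    (ν : ℂ → Matrix (Fin n) (Fin n) ℂ) (hν_smooth : MSmoothOn n ν UHP)
    (Φp Φm : ℝ → ℂ → Matrix (Fin n) (Fin n) ℂ)
    (hΦp_smooth : MSmoothOn2 n Φp D UHP)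
    (hΦm_smooth : MSmoothOn2 n Φm D UHP)
    (hΦp_inv : ∀ t ∈ D, ∀ z ∈ UHP, IsUnit (Φp t z))
    (hΦm_inv : ∀ t ∈ D, ∀ z ∈ UHP, IsUnit (Φm t z))
    (hΦp_zero : ∀ z ∈ UHP, Φp 0 z = 1)
    (hΦm_zero : ∀ z ∈ UHP, Φm 0 z = 1)
    (hΦp_eq : ∀ t ∈ D, ∀ z ∈ UHP,
      mwDbar n (Φp t) z = ((t : ℂ) * μ z) • mwD n (Φp t) z)
    (hΦm_eq : ∀ t ∈ D, ∀ z ∈ UHP, mwD n (Φm t) z = 0) :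
    ∀ z ∈ UHP,
      mwD n (fun w =>
          mwDbar n (fun w' =>
              mderiv0 n (fun t => (Φp t w' * Φm t w')ᴴ * (Φp t w' * Φm t w'))) w) z
        = 0 := by
  intro z hz
  obtain ⟨U, hUD, hU_open, hU0⟩ : ∃ U ⊆ D, IsOpen U ∧ (0:ℝ) ∈ U := mem_nhds_iff.mp hD
  set O : Set (ℝ × ℂ) := U ×ˢ UHP with hO_def
  have hO : IsOpen O := hU_open.prod isOpen_UHP
  have hmemO : ∀ w ∈ UHP, ((0:ℝ), w) ∈ O := fun w hw => Set.mk_mem_prod hU0 hw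
  -- entrywise joint smoothness on O
  have hp : ∀ i j, ContDiffOn ℝ (⊤:ℕ∞) (fun p : ℝ × ℂ => Φp p.1 p.2 i j) O :=
    fun i j => (hΦp_smooth i j).mono (Set.prod_mono hUD subset_rfl)
  have hm : ∀ i j, ContDiffOn ℝ (⊤:ℕ∞) (fun p : ℝ × ℂ => Φm p.1 p.2 i j) O :=
    fun i j => (hΦm_smooth i j).mono (Set.prod_mono hUD subset_rfl)
  -- first variations, entrywise
  set a : Fin n → Fin n → ℂ → ℂ :=
    fun i j w => deriv (fun t => Φp t w i j) 0 with ha_def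
  set b : Fin n → Fin n → ℂ → ℂ :=
    fun i j w => deriv (fun t => Φm t w i j) 0 with hb_def
  -- smoothness of a, b
  have haC : ∀ i j, ∀ w ∈ UHP, ContDiffAt ℝ (⊤:ℕ∞) (a i j) w := by
    intro i j w hw
    exact slice_deriv_contDiffAt hO (hp i j) (hmemO w hw)
  have hbC : ∀ i j, ∀ w ∈ UHP, ContDiffAt ℝ (⊤:ℕ∞) (b i j) w := by
    intro i j w hw
    exact slice_deriv_contDiffAt hO (hm i j) (hmemO w hw)
  -- eventual membership of t in U
  have hUt : ∀ᶠ t in nhds (0:ℝ), t ∈ U := hU_open.mem_nhds hU0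
  -- (F2): ∂̄ a = 0 on UHP
  have haBar : ∀ i j, ∀ w ∈ UHP, wDbar (a i j) w = 0 := by
    intro i j w hw
    have hswap := swap_wDbar (h := fun p : ℝ × ℂ => Φp p.1 p.2 i j) hO (hp i j) (hmemO w hw)
    have e : (fun t => wDbar (fun w' => Φp t w' i j) w) =ᶠ[nhds (0:ℝ)]
        (fun t => ((t : ℂ) * μ w) * wD (fun w' => Φp t w' i j) w) := by
      filter_upwards [hUt] with t ht
      have := hΦp_eq t (hUD ht) w hw
      have h2 : mwDbar n (Φp t) w i j = (((t:ℂ) * μ w) • mwD n (Φp t) w) i j := by rw [this]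
      simpa [mwDbar, mwD, Matrix.smul_apply, smul_eq_mul] using h2
    have hg1 := slice_fderiv_diff_t (h := fun p : ℝ × ℂ => Φp p.1 p.2 i j) hO (hp i j)
      (hmemO w hw) 1
    have hgI := slice_fderiv_diff_t (h := fun p : ℝ × ℂ => Φp p.1 p.2 i j) hO (hp i j)
      (hmemO w hw) Complex.I
    have hgd : HasDerivAt (fun t => wD (fun w' => Φp t w' i j) w)
        ((1/2 : ℂ) * (deriv (fun t => fderiv ℝ (fun w' => Φp t w' i j) w 1) 0
          - Complex.I * deriv (fun t => fderiv ℝ (fun w' => Φp t w' i j) w Complex.I) 0)) 0 :=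
      (hg1.hasDerivAt.sub (hgI.hasDerivAt.const_mul Complex.I)).const_mul ((1:ℂ)/2)
    have hfd : HasDerivAt (fun t : ℝ => ((t : ℂ) * μ w)) (μ w) 0 := by
      simpa using (Complex.ofRealCLM.hasDerivAt (x := (0:ℝ))).mul_const (μ w)
    have hprod := (hfd.fun_mul hgd).deriv
    have hg0 : wD (fun w' => Φp 0 w' i j) w = 0 := by
      have e0 : (fun w' => Φp 0 w' i j) =ᶠ[nhds w] (fun _ => (1 : Matrix (Fin n) (Fin n) ℂ) i j) := by
        filter_upwards [isOpen_UHP.mem_nhds hw] with w' hw'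
        rw [hΦp_zero w' hw']
      rw [wD_congr e0]; simp [wD]
    rw [hswap, e.deriv_eq, hprod, hg0]
    simp
  -- (F3): ∂ b = 0 on UHP
  have hbD : ∀ i j, ∀ w ∈ UHP, wD (b i j) w = 0 := by
    intro i j w hw
    have hswap := swap_wD (h := fun p : ℝ × ℂ => Φm p.1 p.2 i j) hO (hm i j) (hmemO w hw)
    have e : (fun t => wD (fun w' => Φm t w' i j) w) =ᶠ[nhds (0:ℝ)]
        (fun _ => (0:ℂ)) := by
      filter_upwards [hUt] with t ht
      have := hΦm_eq t (hUD ht) w hw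
      have h2 : mwD n (Φm t) w i j = (0 : Matrix (Fin n) (Fin n) ℂ) i j := by rw [this]
      simpa [mwD] using h2
    rw [hswap, e.deriv_eq]
    simp
  -- (F5): entrywise formula for the first variation of the metric factor
  have hF5 : ∀ i j, ∀ w ∈ UHP,
      mderiv0 n (fun t => (Φp t w * Φm t w)ᴴ * (Φp t w * Φm t w)) i j
        = star (a j i w + b j i w) + (a i j w + b i j w) := by
    intro i j w hw
    have hPd : ∀ k l, HasDerivAt (fun t => Φp t w k l) (a k l w) 0 := by
      intro k l
      refine DifferentiableAt.hasDerivAt ?_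
      have := ((hp k l).contDiffAt (hO.mem_nhds (hmemO w hw))).comp (0:ℝ)
        (contDiffAt_id.prodMk contDiffAt_const)
      exact this.differentiableAt (by simp)
    have hMd : ∀ k l, HasDerivAt (fun t => Φm t w k l) (b k l w) 0 := by
      intro k l
      refine DifferentiableAt.hasDerivAt ?_
      have := ((hm k l).contDiffAt (hO.mem_nhds (hmemO w hw))).comp (0:ℝ)
        (contDiffAt_id.prodMk contDiffAt_const)
      exact this.differentiableAt (by simp)
    have hXd : ∀ k l, HasDerivAt (fun t => (Φp t w * Φm t w) k l) (a k l w + b k l w) 0 := by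
      intro k l
      have hfun : (fun t => (Φp t w * Φm t w) k l)
          = fun t => ∑ m, Φp t w k m * Φm t w m l := by
        funext t; rw [Matrix.mul_apply]
      rw [hfun]
      have hsum : HasDerivAt (fun t => ∑ m, Φp t w k m * Φm t w m l)
          (∑ m, (a k m w * Φm 0 w m l + Φp 0 w k m * b m l w)) 0 :=
        HasDerivAt.fun_sum (fun m _ => (hPd k m).mul (hMd m l))
      have hval : (∑ m, (a k m w * Φm 0 w m l + Φp 0 w k m * b m l w))
          = a k l w + b k l w := by
        rw [hΦp_zero w hw, hΦm_zero w hw]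
        simp [Matrix.one_apply, Finset.sum_add_distrib]
      rwa [hval] at hsum
    have hX0 : (fun t => Φp t w * Φm t w) 0 = 1 := by
      simp only [hΦp_zero w hw, hΦm_zero w hw, one_mul]
    have hgd : HasDerivAt
        (fun t => ((Φp t w * Φm t w)ᴴ * (Φp t w * Φm t w)) i j)
        (∑ k, (star (a k i w + b k i w) * (Φp 0 w * Φm 0 w) k j
          + star ((Φp 0 w * Φm 0 w) k i) * (a k j w + b k j w))) 0 := by
      have hfun : (fun t => ((Φp t w * Φm t w)ᴴ * (Φp t w * Φm t w)) i j)
          = fun t => ∑ k, star ((Φp t w * Φm t w) k i) * ((Φp t w * Φm t w) k j) := by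
        funext t; simp [Matrix.mul_apply, Matrix.conjTranspose_apply, mul_comm]
      rw [hfun]
      exact HasDerivAt.fun_sum (fun k _ => ((hXd k i).star.mul (hXd k j)))
    have : mderiv0 n (fun t => (Φp t w * Φm t w)ᴴ * (Φp t w * Φm t w)) i j
        = ∑ k, (star (a k i w + b k i w) * (Φp 0 w * Φm 0 w) k j
          + star ((Φp 0 w * Φm 0 w) k i) * (a k j w + b k j w)) := by
      exact hgd.deriv
    rw [this, hΦp_zero w hw, hΦm_zero w hw, one_mul]
    simp [Matrix.one_apply, Finset.sum_add_distrib, apply_ite star]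
  -- differentiability facts at points of UHP
  have haD : ∀ i j, ∀ w ∈ UHP, DifferentiableAt ℝ (a i j) w := fun i j w hw =>
    (haC i j w hw).differentiableAt (by simp)
  have hbDf : ∀ i j, ∀ w ∈ UHP, DifferentiableAt ℝ (b i j) w := fun i j w hw =>
    (hbC i j w hw).differentiableAt (by simp)
  -- Step 1: value of ∂̄ of the entry of F on UHP
  ext i j
  have hFij : ∀ w ∈ UHP,
      wDbar (fun w' => mderiv0 n
        (fun t => (Φp t w' * Φm t w')ᴴ * (Φp t w' * Φm t w')) i j) w
      = star (wD (a j i) w) + wDbar (b i j) w := by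
    intro w hw
    have e5 : (fun w' => mderiv0 n
        (fun t => (Φp t w' * Φm t w')ᴴ * (Φp t w' * Φm t w')) i j) =ᶠ[nhds w]
        (fun w' => star (a j i w' + b j i w') + (a i j w' + b i j w')) := by
      filter_upwards [isOpen_UHP.mem_nhds hw] with w' hw'
      exact hF5 i j w' hw'
    rw [wDbar_congr e5]
    have hd1 : DifferentiableAt ℝ (fun w' => star (a j i w' + b j i w')) w := by
      have := star_contDiffAt (f := fun w' => a j i w' + b j i w')
        (((haC j i w hw).add (hbC j i w hw)))
      exact this.differentiableAt (by simp)
    have hd2 : DifferentiableAt ℝ (fun w' => a i j w' + b i j w') w :=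
      (haD i j w hw).add (hbDf i j w hw)
    rw [wDbar_add hd1 hd2, wDbar_star,
      wD_add (haD j i w hw) (hbDf j i w hw),
      wDbar_add (haD i j w hw) (hbDf i j w hw),
      hbD j i w hw, haBar i j w hw]
    simp
  -- Step 2: conclude
  have egoal : (fun w => mwDbar n (fun w' =>
      mderiv0 n (fun t => (Φp t w' * Φm t w')ᴴ * (Φp t w' * Φm t w'))) w i j)
      =ᶠ[nhds z] (fun w => star (wD (a j i) w) + wDbar (b i j) w) := by
    filter_upwards [isOpen_UHP.mem_nhds hz] with w hw
    simpa [mwDbar] using hFij w hw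
  have goal1 : mwD n (fun w => mwDbar n (fun w' =>
      mderiv0 n (fun t => (Φp t w' * Φm t w')ᴴ * (Φp t w' * Φm t w'))) w) z i j
      = wD (fun w => star (wD (a j i) w) + wDbar (b i j) w) z := by
    simp only [mwD, Matrix.of_apply]
    exact wD_congr egoal
  rw [goal1]
  have hdA : DifferentiableAt ℝ (fun w => star (wD (a j i) w)) z :=
    (star_contDiffAt (wD_contDiffAt (haC j i z hz))).differentiableAt
      (by simp)
  have hdB : DifferentiableAt ℝ (wDbar (b i j)) z :=
    (wDbar_contDiffAt (hbC i j z hz)).differentiableAt (by simp)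
  rw [wD_add hdA hdB, wD_star]
  have hA0 : wDbar (wD (a j i)) z = 0 := by
    rw [← wD_wDbar_comm (haC j i z hz)]
    have e : wDbar (a j i) =ᶠ[nhds z] (fun _ => (0:ℂ)) := by
      filter_upwards [isOpen_UHP.mem_nhds hz] with w hw
      exact haBar j i w hw
    rw [wD_congr e, wD_zero]
  have hB0 : wD (wDbar (b i j)) z = 0 := by
    rw [wD_wDbar_comm (hbC i j z hz)]
    have e : wD (b i j) =ᶠ[nhds z] (fun _ => (0:ℂ)) := by
      filter_upwards [isOpen_UHP.mem_nhds hz] with w hw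
      exact hbD i j w hw
    rw [wDbar_congr e, wDbar_zero]
  rw [hA0, hB0]
  simp
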